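/- Let D = (V,A) be a digraph and let a ∈ A be an arc. Then B_D(q,y,z) + B_{D^{−a}}(q,y,z) = (y+z) · B_{D∖a}(q,y,z) + (2 − y − z) · B_{D/a}(q,y,z), where D^{−a} is obtained from D by swapping the source and target of a, D∖a is obtained by deleting a, and D/a is obtained by deleting a and identifying the vertices s(a) and t(a). Equivalently, for every positive integer q the corresponding identity holds between the coloring sums defining these B-polynomials. -/

import Mathlib

open Finset

/-- The sum over all `q`-colorings of a digraph of
`y ^ (number of ascents) * z ^ (number of descents)`. -/
def colorSum (V A : Type) [Fintype V] [DecidableEq V] [Fintype A]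
    (s t : A → V) (q : ℕ) (y z : ℚ) : ℚ :=
  ∑ f : V → Fin q,
    y ^ (Finset.univ.filter (fun a => f (s a) < f (t a))).card *
    z ^ (Finset.univ.filter (fun a => f (t a) < f (s a))).card

/-- Splitting a filter-card over all arcs into the arcs `≠ a` and the arc `a`. -/
lemma card_split {A : Type} [Fintype A] [DecidableEq A] (a : A) (P : A → Prop)
    [DecidablePred P] :
    (Finset.univ.filter P).card =
      ((Finset.univ : Finset {b : A // b ≠ a}).filter (fun b => P b.1)).card +
        (if P a then 1 else 0) := by
  classical
  rw [Finset.card_filter, Finset.card_filter]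
  rw [← Finset.sum_filter_add_sum_filter_not (Finset.univ : Finset A) (· ≠ a)]
  congr 1
  · exact Finset.sum_subtype (Finset.univ.filter (· ≠ a)) (by simp)
      (fun b => if P b then 1 else 0)
  · have h : Finset.univ.filter (fun x : A => ¬ x ≠ a) = {a} := by
      ext x; simp
    rw [h, Finset.sum_singleton]

/-- The key combinatorial identity, for every natural number `q`. -/
lemma key_identity (V A : Type) [Fintype V] [DecidableEq V]
    [Fintype A] [DecidableEq A]
    (s t : A → V) (a : A)
    (V' : Type) [Fintype V'] [DecidableEq V'] (π : V → V')
    (hπsurj : Function.Surjective π)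
    (hπ : ∀ x y : V, π x = π y ↔
      (x = y ∨ ((x = s a ∨ x = t a) ∧ (y = s a ∨ y = t a))))
    (q : ℕ) (y z : ℚ) :
    colorSum V A s t q y z +
      colorSum V A (Function.update s a (t a)) (Function.update t a (s a)) q y z =
    (y + z) * colorSum V {b : A // b ≠ a} (fun b => s b.1) (fun b => t b.1) q y z +
      (2 - y - z) * colorSum V' {b : A // b ≠ a}
        (fun b => π (s b.1)) (fun b => π (t b.1)) q y z := by
  classical
  set N1 : (V → Fin q) → ℕ := fun f =>
    ((Finset.univ : Finset {b : A // b ≠ a}).filter (fun b => f (s b.1) < f (t b.1))).card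
  set N2 : (V → Fin q) → ℕ := fun f =>
    ((Finset.univ : Finset {b : A // b ≠ a}).filter (fun b => f (t b.1) < f (s b.1))).card
  -- contraction sum equals sum over colorings with f (s a) = f (t a)
  have hcon : colorSum V' {b : A // b ≠ a}
      (fun b => π (s b.1)) (fun b => π (t b.1)) q y z =
      ∑ f : V → Fin q, (if f (s a) = f (t a) then y ^ N1 f * z ^ N2 f else 0) := by
    rw [← Finset.sum_filter]
    unfold colorSum
    refine Finset.sum_bij (fun g _ => g ∘ π) ?_ ?_ ?_ ?_
    · intro g _
      simp only [Finset.mem_filter, Finset.mem_univ, true_and, Function.comp]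
      have : π (s a) = π (t a) := (hπ _ _).2 (Or.inr ⟨Or.inl rfl, Or.inr rfl⟩)
      rw [this]
    · intro g₁ _ g₂ _ h
      funext v'
      obtain ⟨x, rfl⟩ := hπsurj v'
      exact congrFun h x
    · intro f hf
      simp only [Finset.mem_filter, Finset.mem_univ, true_and] at hf
      refine ⟨f ∘ Function.surjInv hπsurj, Finset.mem_univ _, ?_⟩
      funext x
      have h1 : π (Function.surjInv hπsurj (π x)) = π x :=
        Function.surjInv_eq hπsurj (π x)
      rcases (hπ _ _).1 h1 with h2 | ⟨h2, h3⟩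
      · simp [Function.comp, h2]
      · simp only [Function.comp_apply]
        rcases h2 with h2 | h2 <;> rcases h3 with h3 | h3 <;> rw [h2, h3] <;>
          first | exact hf | exact hf.symm
    · intro g _
      rfl
  -- expand both full sums using `card_split`
  rw [hcon]
  unfold colorSum
  rw [← Finset.sum_add_distrib, Finset.mul_sum, Finset.mul_sum,
    ← Finset.sum_add_distrib]
  refine Finset.sum_congr rfl (fun f _ => ?_)
  have hs1 := card_split a (fun b => f (s b) < f (t b))
  have hs2 := card_split a (fun b => f (t b) < f (s b))
  have hs3 := card_split a (fun b =>
    f (Function.update s a (t a) b) < f (Function.update t a (s a) b))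
  have hs4 := card_split a (fun b =>
    f (Function.update t a (s a) b) < f (Function.update s a (t a) b))
  have hupdcongr : ∀ (u v : A → V),
      ((Finset.univ : Finset {b : A // b ≠ a}).filter (fun b =>
        f (Function.update u a (v a) b.1) < f (Function.update v a (u a) b.1))).card =
      ((Finset.univ : Finset {b : A // b ≠ a}).filter
        (fun b => f (u b.1) < f (v b.1))).card := by
    intro u v
    congr 1
    refine Finset.filter_congr (fun b _ => ?_)
    rw [Function.update_of_ne b.2, Function.update_of_ne b.2]
  rw [hs1, hs2, hs3, hs4, hupdcongr s t, hupdcongr t s]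
  simp only [Function.update_self]
  rcases lt_trichotomy (f (s a)) (f (t a)) with h | h | h
  · have h' : ¬ f (t a) < f (s a) := not_lt.2 h.le
    have h'' : ¬ f (s a) = f (t a) := ne_of_lt h
    simp only [h, h', h'', if_true, if_false]
    ring
  · simp only [h, lt_irrefl, if_false, if_true]
    ring
  · have h' : ¬ f (s a) < f (t a) := not_lt.2 h.le
    have h'' : ¬ f (s a) = f (t a) := (ne_of_lt h).symm
    simp only [h, h', h'', if_true, if_false]
    ring

theorem B_arc_relation (V A : Type) [Fintype V] [DecidableEq V]
    [Fintype A] [DecidableEq A]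
    (s t : A → V) (a : A)
    (V' : Type) [Fintype V'] [DecidableEq V'] (π : V → V')
    (hπsurj : Function.Surjective π)
    (hπ : ∀ x y : V, π x = π y ↔
      (x = y ∨ ((x = s a ∨ x = t a) ∧ (y = s a ∨ y = t a))))
    (B Brev Bdel Bcon : MvPolynomial (Fin 3) ℚ)
    (hB : ∀ q : ℕ, 0 < q → ∀ y z : ℚ,
      MvPolynomial.eval ![(q : ℚ), y, z] B = colorSum V A s t q y z)
    (hBrev : ∀ q : ℕ, 0 < q → ∀ y z : ℚ,
      MvPolynomial.eval ![(q : ℚ), y, z] Brev =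
        colorSum V A (Function.update s a (t a)) (Function.update t a (s a)) q y z)
    (hBdel : ∀ q : ℕ, 0 < q → ∀ y z : ℚ,
      MvPolynomial.eval ![(q : ℚ), y, z] Bdel =
        colorSum V {b : A // b ≠ a} (fun b => s b.1) (fun b => t b.1) q y z)
    (hBcon : ∀ q : ℕ, 0 < q → ∀ y z : ℚ,
      MvPolynomial.eval ![(q : ℚ), y, z] Bcon =
        colorSum V' {b : A // b ≠ a}
          (fun b => π (s b.1)) (fun b => π (t b.1)) q y z) :
    ∀ q y z : ℚ,
      MvPolynomial.eval ![q, y, z] B + MvPolynomial.eval ![q, y, z] Brev =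
        (y + z) * MvPolynomial.eval ![q, y, z] Bdel +
        (2 - y - z) * MvPolynomial.eval ![q, y, z] Bcon := by
  intro q y z
  -- specialize y,z and view everything as univariate polynomials in the first variable
  set φ : MvPolynomial (Fin 3) ℚ →+* Polynomial ℚ :=
    MvPolynomial.eval₂Hom (Polynomial.C) ![Polynomial.X, Polynomial.C y, Polynomial.C z]
  have heval : ∀ (Q : MvPolynomial (Fin 3) ℚ) (r : ℚ),
      Polynomial.eval r (φ Q) = MvPolynomial.eval ![r, y, z] Q := by
    intro Q r
    show (Polynomial.evalRingHom r) (φ Q) = _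
    rw [← RingHom.comp_apply, MvPolynomial.comp_eval₂Hom]
    have h1 : (Polynomial.evalRingHom r).comp Polynomial.C = RingHom.id ℚ := by
      ext c; simp
    rw [h1]
    have h2 : (fun i => (Polynomial.evalRingHom r)
        (![Polynomial.X, Polynomial.C y, Polynomial.C z] i)) = ![r, y, z] := by
      funext i
      fin_cases i <;> simp
    rw [h2]
    rfl
  set p : Polynomial ℚ :=
    φ B + φ Brev - ((Polynomial.C y + Polynomial.C z) * φ Bdel +
      (Polynomial.C 2 - Polynomial.C y - Polynomial.C z) * φ Bcon) with hp
  have hroots : ∀ n : ℕ, Polynomial.eval ((n : ℚ) + 1) p = 0 := by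
    intro n
    have hq : (0 : ℕ) < n + 1 := Nat.succ_pos n
    have hcast : ((n + 1 : ℕ) : ℚ) = (n : ℚ) + 1 := by push_cast; ring
    simp only [hp, Polynomial.eval_sub, Polynomial.eval_add, Polynomial.eval_mul,
      Polynomial.eval_C, heval, ← hcast]
    rw [hB _ hq, hBrev _ hq, hBdel _ hq, hBcon _ hq]
    have := key_identity V A s t a V' π hπsurj hπ (n + 1) y z
    linarith [this]
  have hp0 : p = 0 := by
    apply Polynomial.eq_zero_of_infinite_isRoot
    apply Set.Infinite.mono (s := Set.range (fun n : ℕ => (n : ℚ) + 1))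
    · rintro x ⟨n, rfl⟩
      exact hroots n
    · exact Set.infinite_range_of_injective (fun m n h => by
        field_simp at h; exact Nat.add_right_cancel (by exact_mod_cast h))
  have := congrArg (Polynomial.eval q) hp0
  simp only [hp, Polynomial.eval_sub, Polynomial.eval_add, Polynomial.eval_mul,
    Polynomial.eval_C, Polynomial.eval_zero, heval] at this
  linarith [this]
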